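/- With the notation above, the function λ₀ satisfies λ₀'' + (2m+1) tan φ · λ₀' + (2(m+1) + (2m+1) sec² φ) λ₀ = Λ sec² φ + ulΛ on (-π/2, π/2). -/

import Mathlib

open Real

/-- The sequence `a₀ = 1`, `a_j = ((2m - 2j + 4)/(2m - 2j + 1)) a_{j-1}`. -/
noncomputable def aSeq (m : ℕ) : ℕ → ℝ
  | 0 => 1
  | j + 1 => ((2 * (m : ℝ) - 2 * ((j : ℝ) + 1) + 4) / (2 * (m : ℝ) - 2 * ((j : ℝ) + 1) + 1))
      * aSeq m j

/-- `λ₀(φ) = ulΛ/(2m+2) + (Λ/(2m+1) − ulΛ/(2m+2))(Σ_{j=0}^m a_j cos^{2j}φ − 2 a_m cos^{2m+2}φ)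
  + c cos^{2m+1}φ sin φ`. -/
noncomputable def lam0 (m : ℕ) (Λ ulΛ c : ℝ) (φ : ℝ) : ℝ :=
  ulΛ / (2 * (m : ℝ) + 2)
    + (Λ / (2 * (m : ℝ) + 1) - ulΛ / (2 * (m : ℝ) + 2)) *
        ((∑ j ∈ Finset.range (m + 1), aSeq m j * Real.cos φ ^ (2 * j))
          - 2 * aSeq m m * Real.cos φ ^ (2 * m + 2))
    + c * Real.cos φ ^ (2 * m + 1) * Real.sin φ

lemma odd_ne (z : ℤ) : (2*(z:ℝ)+1) ≠ 0 := by
  intro h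
  have : ((2*z+1 : ℤ):ℝ) = 0 := by push_cast; linarith
  have : (2*z+1 : ℤ) = 0 := by exact_mod_cast this
  omega

lemma aSeq_rec (m j : ℕ) :
    (2*(m:ℝ) - 2*(j:ℝ) - 1) * aSeq m (j+1) = (2*(m:ℝ) - 2*(j:ℝ) + 2) * aSeq m j := by
  have hne : (2*(m:ℝ) - 2*((j:ℝ)+1) + 1) ≠ 0 := by
    have := odd_ne ((m:ℤ) - (j:ℤ) - 1)
    push_cast at this
    intro h; apply this; linarith
  show (2*(m:ℝ) - 2*(j:ℝ) - 1) *
    (((2 * (m : ℝ) - 2 * ((j : ℝ) + 1) + 4) / (2 * (m : ℝ) - 2 * ((j : ℝ) + 1) + 1)) * aSeq m j)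
    = _
  rw [show (2*(m:ℝ) - 2*((j:ℝ)+1) + 1) = 2*(m:ℝ) - 2*(j:ℝ) - 1 by ring] at hne ⊢
  rw [div_mul_eq_mul_div, mul_div_assoc', mul_div_cancel_left₀ _ hne]
  ring

noncomputable def SA (m : ℕ) (x : ℝ) : ℝ :=
  ∑ j ∈ Finset.range m, aSeq m (j+1) * x^(2*j+2)
noncomputable def SB (m : ℕ) (x : ℝ) : ℝ :=
  ∑ j ∈ Finset.range m, aSeq m (j+1) * ((2*(j:ℝ)+2) * x^(2*j+1))
noncomputable def SC (m : ℕ) (x : ℝ) : ℝ :=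
  ∑ j ∈ Finset.range m, aSeq m (j+1) * ((2*(j:ℝ)+2)*(2*(j:ℝ)+1) * x^(2*j))

lemma combine (m : ℕ) (x : ℝ) :
    x^2*(1-x^2) * SC m x - x^3 * SB m x - (2*(m:ℝ)+1)*x*(1-x^2) * SB m x
      + (2*((m:ℝ)+1)*x^2 + (2*(m:ℝ)+1)) * SA m x
    = 2*(2*(m:ℝ)+1)*aSeq m m * x^(2*m+2) - (2*(m:ℝ)+2)*x^2 := by
  set f : ℕ → ℝ := fun j => (2*(j:ℝ)+1)*(2*(j:ℝ)+1-2*(m:ℝ)) * aSeq m (j+1) * x^(2*j+2) with hf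
  have step : ∀ j, x^2*(1-x^2) * (aSeq m (j+1) * ((2*(j:ℝ)+2)*(2*(j:ℝ)+1) * x^(2*j)))
      - x^3 * (aSeq m (j+1) * ((2*(j:ℝ)+2) * x^(2*j+1)))
      - (2*(m:ℝ)+1)*x*(1-x^2) * (aSeq m (j+1) * ((2*(j:ℝ)+2) * x^(2*j+1)))
      + (2*((m:ℝ)+1)*x^2 + (2*(m:ℝ)+1)) * (aSeq m (j+1) * x^(2*j+2))
      = f j - f (j+1) := by
    intro j
    have hrec := aSeq_rec m (j+1)
    simp only [hf]
    push_cast at hrec ⊢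
    linear_combination (-(2*(j:ℝ)+3)) * x^(2*j+4) * hrec
  have hsum : ∑ j ∈ Finset.range m, (f j - f (j+1)) = f 0 - f m :=
    Finset.sum_range_sub' f m
  have lhs_eq : x^2*(1-x^2) * SC m x - x^3 * SB m x - (2*(m:ℝ)+1)*x*(1-x^2) * SB m x
      + (2*((m:ℝ)+1)*x^2 + (2*(m:ℝ)+1)) * SA m x
      = ∑ j ∈ Finset.range m, (f j - f (j+1)) := by
    simp only [SA, SB, SC, Finset.mul_sum, ← Finset.sum_sub_distrib, ← Finset.sum_add_distrib]
    exact Finset.sum_congr rfl fun j _ => step j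
  rw [lhs_eq, hsum]
  have h1 : aSeq m 1 = (2*(m:ℝ)+2)/(2*(m:ℝ)-1) := by
    show ((2 * (m : ℝ) - 2 * ((0:ℕ) + 1) + 4) / (2 * (m : ℝ) - 2 * ((0:ℕ) + 1) + 1)) * aSeq m 0 = _
    show _ * (1:ℝ) = _
    push_cast; ring_nf
  have hm1 : aSeq m (m+1) = -2 * aSeq m m := by
    show ((2 * (m : ℝ) - 2 * ((m : ℝ) + 1) + 4) / (2 * (m : ℝ) - 2 * ((m : ℝ) + 1) + 1))
        * aSeq m m = _
    rw [show (2*(m:ℝ) - 2*((m:ℝ)+1) + 4) = 2 by ring,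
        show (2*(m:ℝ) - 2*((m:ℝ)+1) + 1) = -1 by ring]
    norm_num
  have hne : (2*(m:ℝ)-1) ≠ 0 := by
    have := odd_ne ((m:ℤ) - 1); push_cast at this; intro h; apply this; linarith
  simp only [hf, hm1, h1]
  push_cast
  field_simp
  ring

noncomputable def D1 (m : ℕ) (Λ ulΛ c φ : ℝ) : ℝ :=
  (Λ / (2 * (m : ℝ) + 1) - ulΛ / (2 * (m : ℝ) + 2)) *
      ((-Real.sin φ) * SB m (Real.cos φ)
        + 2 * aSeq m m * (2*(m:ℝ)+2) * Real.cos φ ^ (2*m+1) * Real.sin φ)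
    + c * (-(2*(m:ℝ)+1) * Real.cos φ ^ (2*m) + (2*(m:ℝ)+2) * Real.cos φ ^ (2*m+2))

noncomputable def D2 (m : ℕ) (Λ ulΛ c φ : ℝ) : ℝ :=
  (Λ / (2 * (m : ℝ) + 1) - ulΛ / (2 * (m : ℝ) + 2)) *
      (Real.sin φ ^ 2 * SC m (Real.cos φ) - Real.cos φ * SB m (Real.cos φ)
        - 2 * aSeq m m * (2*(m:ℝ)+2) *
            ((2*(m:ℝ)+1) * Real.cos φ ^ (2*m) * Real.sin φ ^ 2 - Real.cos φ ^ (2*m+2)))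
    + c * Real.sin φ *
        ((2*(m:ℝ)+1) * (2*(m:ℝ)) * Real.cos φ ^ (2*m-1) - (2*(m:ℝ)+2)^2 * Real.cos φ ^ (2*m+1))

lemma lam0_eq (m : ℕ) (Λ ulΛ c φ : ℝ) :
    lam0 m Λ ulΛ c φ = ulΛ / (2 * (m : ℝ) + 2)
      + (Λ / (2 * (m : ℝ) + 1) - ulΛ / (2 * (m : ℝ) + 2)) *
          ((1 + SA m (Real.cos φ)) - 2 * aSeq m m * Real.cos φ ^ (2 * m + 2))
      + c * Real.cos φ ^ (2 * m + 1) * Real.sin φ := by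
  unfold lam0 SA
  rw [Finset.sum_range_succ',
    Finset.sum_congr rfl (fun j _ => by rw [show 2*(j+1) = 2*j+2 from by omega])]
  simp only [show aSeq m 0 = 1 from rfl, Nat.mul_zero, pow_zero, mul_one]
  ring

lemma hasDerivAt_lam0 (m : ℕ) (Λ ulΛ c φ : ℝ) :
    HasDerivAt (lam0 m Λ ulΛ c) (D1 m Λ ulΛ c φ) φ := by
  have hS : HasDerivAt (fun ψ => ∑ j ∈ Finset.range (m+1), aSeq m j * Real.cos ψ ^ (2*j))
      (∑ j ∈ Finset.range (m+1),
        aSeq m j * ((2*j : ℕ) * Real.cos φ ^ (2*j-1) * (-Real.sin φ))) φ :=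
    HasDerivAt.fun_sum fun j _ => ((Real.hasDerivAt_cos φ).pow (2*j)).const_mul _
  have hP : HasDerivAt (fun ψ => 2 * aSeq m m * Real.cos ψ ^ (2*m+2))
      (2 * aSeq m m * ((2*m+2 : ℕ) * Real.cos φ ^ (2*m+2-1) * (-Real.sin φ))) φ :=
    ((Real.hasDerivAt_cos φ).pow (2*m+2)).const_mul _
  have hG : HasDerivAt (fun ψ => c * Real.cos ψ ^ (2*m+1) * Real.sin ψ)
      (c * ((2*m+1 : ℕ) * Real.cos φ ^ (2*m+1-1) * (-Real.sin φ)) * Real.sin φ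
        + c * Real.cos φ ^ (2*m+1) * Real.cos φ) φ :=
    (((Real.hasDerivAt_cos φ).pow (2*m+1)).const_mul c).mul (Real.hasDerivAt_sin φ)
  have h := ((((hS.sub hP).const_mul
      (Λ / (2 * (m : ℝ) + 1) - ulΛ / (2 * (m : ℝ) + 2))).const_add
      (ulΛ / (2 * (m : ℝ) + 2))).add hG)
  have heq : (Λ / (2 * (m : ℝ) + 1) - ulΛ / (2 * (m : ℝ) + 2)) *
      ((∑ j ∈ Finset.range (m+1),
        aSeq m j * ((2*j : ℕ) * Real.cos φ ^ (2*j-1) * (-Real.sin φ)))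
        - 2 * aSeq m m * ((2*m+2 : ℕ) * Real.cos φ ^ (2*m+2-1) * (-Real.sin φ)))
      + (c * ((2*m+1 : ℕ) * Real.cos φ ^ (2*m+1-1) * (-Real.sin φ)) * Real.sin φ
        + c * Real.cos φ ^ (2*m+1) * Real.cos φ)
      = D1 m Λ ulΛ c φ := by
    unfold D1 SB
    rw [Finset.sum_range_succ']
    have hz : aSeq m 0 * ((2*0 : ℕ) * Real.cos φ ^ (2*0-1) * (-Real.sin φ)) = 0 := by
      norm_num
    rw [hz, Finset.sum_congr rfl (fun j _ => show
        aSeq m (j+1) * (((2*(j+1):ℕ):ℝ) * Real.cos φ ^ (2*(j+1)-1) * (-Real.sin φ))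
          = aSeq m (j+1) * ((2*(j:ℝ)+2) * Real.cos φ^(2*j+1)) * (-Real.sin φ) from by
        rw [show 2*(j+1)-1 = 2*j+1 from by omega]; push_cast; ring),
      ← Finset.sum_mul]
    rw [show 2*m+2-1 = 2*m+1 from by omega, show 2*m+1-1 = 2*m from by omega]
    have hs2 : Real.sin φ ^ 2 = 1 - Real.cos φ ^ 2 := Real.sin_sq φ
    push_cast
    linear_combination (-(c * (2*(m:ℝ)+1) * Real.cos φ ^ (2*m))) * hs2
  exact heq ▸ h

lemma hasDerivAt_D1 (m : ℕ) (Λ ulΛ c φ : ℝ) :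
    HasDerivAt (D1 m Λ ulΛ c) (D2 m Λ ulΛ c φ) φ := by
  have hSB : HasDerivAt (fun ψ => SB m (Real.cos ψ))
      (∑ j ∈ Finset.range m, aSeq m (j+1) *
        ((2*(j:ℝ)+2) * ((2*j+1 : ℕ) * Real.cos φ ^ (2*j+1-1) * (-Real.sin φ)))) φ := by
    unfold SB
    exact HasDerivAt.fun_sum fun j _ =>
      ((((Real.hasDerivAt_cos φ).pow (2*j+1)).const_mul (2*(j:ℝ)+2)).const_mul _)
  have h1 : HasDerivAt (fun ψ => (-Real.sin ψ) * SB m (Real.cos ψ))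
      ((-Real.cos φ) * SB m (Real.cos φ) + (-Real.sin φ) *
        (∑ j ∈ Finset.range m, aSeq m (j+1) *
          ((2*(j:ℝ)+2) * ((2*j+1 : ℕ) * Real.cos φ ^ (2*j+1-1) * (-Real.sin φ))))) φ :=
    ((Real.hasDerivAt_sin φ).neg).mul hSB
  have h2 : HasDerivAt (fun ψ => 2 * aSeq m m * (2*(m:ℝ)+2) * Real.cos ψ ^ (2*m+1) * Real.sin ψ)
      (2 * aSeq m m * (2*(m:ℝ)+2) * ((2*m+1 : ℕ) * Real.cos φ ^ (2*m+1-1) * (-Real.sin φ))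
          * Real.sin φ
        + 2 * aSeq m m * (2*(m:ℝ)+2) * Real.cos φ ^ (2*m+1) * Real.cos φ) φ :=
    (((Real.hasDerivAt_cos φ).pow (2*m+1)).const_mul
      (2 * aSeq m m * (2*(m:ℝ)+2))).mul (Real.hasDerivAt_sin φ)
  have h3 : HasDerivAt (fun ψ => c * (-(2*(m:ℝ)+1) * Real.cos ψ ^ (2*m)
        + (2*(m:ℝ)+2) * Real.cos ψ ^ (2*m+2)))
      (c * (-(2*(m:ℝ)+1) * ((2*m : ℕ) * Real.cos φ ^ (2*m-1) * (-Real.sin φ))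
        + (2*(m:ℝ)+2) * ((2*m+2 : ℕ) * Real.cos φ ^ (2*m+2-1) * (-Real.sin φ)))) φ :=
    ((((Real.hasDerivAt_cos φ).pow (2*m)).const_mul (-(2*(m:ℝ)+1))).add
      (((Real.hasDerivAt_cos φ).pow (2*m+2)).const_mul (2*(m:ℝ)+2))).const_mul c
  have h := ((h1.add h2).const_mul
      (Λ / (2 * (m : ℝ) + 1) - ulΛ / (2 * (m : ℝ) + 2))).add h3
  have heq : (Λ / (2 * (m : ℝ) + 1) - ulΛ / (2 * (m : ℝ) + 2)) *
      (((-Real.cos φ) * SB m (Real.cos φ) + (-Real.sin φ) *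
        (∑ j ∈ Finset.range m, aSeq m (j+1) *
          ((2*(j:ℝ)+2) * ((2*j+1 : ℕ) * Real.cos φ ^ (2*j+1-1) * (-Real.sin φ)))))
        + (2 * aSeq m m * (2*(m:ℝ)+2) * ((2*m+1 : ℕ) * Real.cos φ ^ (2*m+1-1) * (-Real.sin φ))
            * Real.sin φ
          + 2 * aSeq m m * (2*(m:ℝ)+2) * Real.cos φ ^ (2*m+1) * Real.cos φ))
      + c * (-(2*(m:ℝ)+1) * ((2*m : ℕ) * Real.cos φ ^ (2*m-1) * (-Real.sin φ))
        + (2*(m:ℝ)+2) * ((2*m+2 : ℕ) * Real.cos φ ^ (2*m+2-1) * (-Real.sin φ)))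
      = D2 m Λ ulΛ c φ := by
    unfold D2 SC
    rw [Finset.sum_congr rfl (fun j _ => show
        aSeq m (j+1) * ((2*(j:ℝ)+2) * (((2*j+1 : ℕ):ℝ) * Real.cos φ ^ (2*j+1-1) * (-Real.sin φ)))
          = aSeq m (j+1) * ((2*(j:ℝ)+2)*(2*(j:ℝ)+1) * Real.cos φ^(2*j)) * (-Real.sin φ) from by
        rw [show 2*j+1-1 = 2*j from by omega]; push_cast; ring),
      ← Finset.sum_mul]
    rw [show 2*m+2-1 = 2*m+1 from by omega, show 2*m+1-1 = 2*m from by omega]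
    push_cast
    ring
  exact heq ▸ h

lemma final_mul (m : ℕ) (hm : 1 ≤ m) (α β cc x y : ℝ) (hy : y^2 = 1 - x^2) :
    x^2 * (β * (y^2 * SC m x - x * SB m x
        - 2*aSeq m m*(2*(m:ℝ)+2)*((2*(m:ℝ)+1)*x^(2*m)*y^2 - x^(2*m+2)))
      + cc * y * ((2*(m:ℝ)+1)*(2*(m:ℝ))*x^(2*m-1) - (2*(m:ℝ)+2)^2*x^(2*m+1)))
    + (2*(m:ℝ)+1)*x*y * (β * ((-y) * SB m x + 2*aSeq m m*(2*(m:ℝ)+2)*x^(2*m+1)*y)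
      + cc * (-(2*(m:ℝ)+1)*x^(2*m) + (2*(m:ℝ)+2)*x^(2*m+2)))
    + (2*((m:ℝ)+1)*x^2 + (2*(m:ℝ)+1)) *
        (α + β*((1 + SA m x) - 2*aSeq m m*x^(2*m+2)) + cc*x^(2*m+1)*y)
    = (2*(m:ℝ)+1)*(β+α) + (2*(m:ℝ)+2)*α*x^2 := by
  have hcomb := combine m x
  have hpow : x^(2*m) = x^(2*m-1)*x := by
    rw [← pow_succ]
    congr 1
    omega
  linear_combination β * hcomb + (β*(x^2*SC m x - (2*(m:ℝ)+1)*x*SB m x)) * hy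
    + (-(2*(m:ℝ)+1)*(2*(m:ℝ))*x*y*cc) * hpow

lemma final_alg (m : ℕ) (hm : 1 ≤ m) (α β cc x y : ℝ) (hx : x ≠ 0) (hy : y^2 = 1 - x^2) :
    (β * (y^2 * SC m x - x * SB m x
        - 2*aSeq m m*(2*(m:ℝ)+2)*((2*(m:ℝ)+1)*x^(2*m)*y^2 - x^(2*m+2)))
      + cc * y * ((2*(m:ℝ)+1)*(2*(m:ℝ))*x^(2*m-1) - (2*(m:ℝ)+2)^2*x^(2*m+1)))
    + (2*(m:ℝ)+1) * (y/x) * (β * ((-y) * SB m x + 2*aSeq m m*(2*(m:ℝ)+2)*x^(2*m+1)*y)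
      + cc * (-(2*(m:ℝ)+1)*x^(2*m) + (2*(m:ℝ)+2)*x^(2*m+2)))
    + (2*((m:ℝ)+1) + (2*(m:ℝ)+1)*(1/x)^2) *
        (α + β*((1 + SA m x) - 2*aSeq m m*x^(2*m+2)) + cc*x^(2*m+1)*y)
    = ((2*(m:ℝ)+1)*(β+α))*(1/x)^2 + (2*(m:ℝ)+2)*α := by
  have h := final_mul m hm α β cc x y hy
  field_simp
  linear_combination h

/-- `λ₀` satisfies
`λ₀'' + (2m+1) tan φ λ₀' + (2(m+1) + (2m+1) sec²φ) λ₀ = Λ sec²φ + ulΛ` on `(-π/2, π/2)`. -/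
theorem stmt9 (m : ℕ) (hm : 2 ≤ m) (Λ ulΛ c : ℝ) :
    ∀ φ ∈ Set.Ioo (-(π / 2)) (π / 2),
      deriv (deriv (lam0 m Λ ulΛ c)) φ
        + (2 * (m : ℝ) + 1) * Real.tan φ * deriv (lam0 m Λ ulΛ c) φ
        + (2 * ((m : ℝ) + 1) + (2 * (m : ℝ) + 1) * (1 / Real.cos φ) ^ 2) * lam0 m Λ ulΛ c φ
        = Λ * (1 / Real.cos φ) ^ 2 + ulΛ := by
  intro φ hφ
  have hc : Real.cos φ ≠ 0 := (Real.cos_pos_of_mem_Ioo hφ).ne'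
  have hd1 : deriv (lam0 m Λ ulΛ c) = D1 m Λ ulΛ c :=
    funext fun ψ => (hasDerivAt_lam0 m Λ ulΛ c ψ).deriv
  rw [hd1, (hasDerivAt_D1 m Λ ulΛ c φ).deriv, lam0_eq, Real.tan_eq_sin_div_cos]
  have halg := final_alg m (by omega) (ulΛ / (2 * (m : ℝ) + 2))
    (Λ / (2 * (m : ℝ) + 1) - ulΛ / (2 * (m : ℝ) + 2)) c
    (Real.cos φ) (Real.sin φ) hc (Real.sin_sq φ)
  have h1 : (2*(m:ℝ)+1) ≠ 0 := by positivity
  have h2 : (2*(m:ℝ)+2) ≠ 0 := by positivity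
  have hR : ((2*(m:ℝ)+1)*((Λ / (2 * (m : ℝ) + 1) - ulΛ / (2 * (m : ℝ) + 2))
        + (ulΛ / (2 * (m : ℝ) + 2))))*(1/Real.cos φ)^2
        + (2*(m:ℝ)+2)*(ulΛ / (2 * (m : ℝ) + 2))
      = Λ*(1/Real.cos φ)^2 + ulΛ := by
    field_simp
    ring
  rw [← hR]
  unfold D1 D2
  linear_combination halg
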